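/- Let D ≥ 3 be an integer, g_c := D^D/(D+1)^{D+1}, and define G_NLO(g) := (D(D+1)/2)·g²·G_LO(g)^{2D+2} / ((2 − G_LO(g))·(1 − g·D·G_LO(g)^{D+1})) for 0 ≤ g < g_c, where G_LO(g) is the unique solution G ∈ [1, (D+1)/D] of G = 1 + g·G^{D+1}. Then lim_{g→g_c⁻} √(1 − g/g_c)·G_NLO(g) = √(D(D+1)/8)/(D − 1); in particular G_NLO diverges like (1 − g/g_c)^{−1/2} at the critical coupling, in contrast to the leading order which remains bounded. -/

import Mathlib

open Finset Real Filter

namespace NLO14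

noncomputable def Gc (D : ℕ) : ℝ := ((D:ℝ)+1)/D
noncomputable def gcrit (D : ℕ) : ℝ := (D:ℝ)^D / ((D:ℝ)+1)^(D+1)
noncomputable def Q (D : ℕ) (x : ℝ) : ℝ :=
  gcrit D * ∑ i ∈ Finset.range (D+1),
    Gc D ^ (D - i) * (∑ j ∈ Finset.range i, x ^ j * Gc D ^ (i - 1 - j))

variable {D : ℕ}

lemma hD0 (hD : 1 ≤ D) : (0:ℝ) < D := by exact_mod_cast Nat.pos_of_ne_zero (by omega)

lemma gcrit_pos (hD : 1 ≤ D) : 0 < gcrit D := by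
  have := hD0 hD; unfold gcrit; positivity

lemma one_lt_Gc (hD : 1 ≤ D) : 1 < Gc D := by
  have h := hD0 hD
  rw [Gc, lt_div_iff₀ h]; linarith

lemma key1 (hD : 1 ≤ D) : gcrit D * (Gc D)^(D+1) = 1/(D:ℝ) := by
  have h0 := hD0 hD
  rw [Gc, gcrit, div_pow]
  field_simp
  ring

lemma key2 (hD : 1 ≤ D) : gcrit D * (((D:ℝ)+1) * (Gc D)^D) = 1 := by
  have h0 := hD0 hD
  rw [Gc, gcrit, div_pow]
  field_simp
  ring

lemma Q_continuous (D : ℕ) : Continuous (Q D) := by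
  unfold Q
  exact continuous_const.mul (continuous_finset_sum _ fun i _ =>
    continuous_const.mul (continuous_finset_sum _ fun j _ =>
      (continuous_pow j).mul continuous_const))

lemma Q_mul (hD : 1 ≤ D) (x : ℝ) :
    Q D x * (x - Gc D) = gcrit D * (∑ i ∈ Finset.range (D+1), Gc D ^ (D-i) * x ^ i) - 1 := by
  have step : (∑ i ∈ Finset.range (D+1),
      Gc D ^ (D - i) * (∑ j ∈ Finset.range i, x ^ j * Gc D ^ (i - 1 - j))) * (x - Gc D)
      = ∑ i ∈ Finset.range (D+1), Gc D ^ (D-i) * (x^i - Gc D ^ i) := by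
    rw [Finset.sum_mul]
    refine Finset.sum_congr rfl fun i _ => ?_
    rw [mul_assoc, geom_sum₂_mul]
  have split : ∑ i ∈ Finset.range (D+1), Gc D ^ (D-i) * (x^i - Gc D ^ i)
      = (∑ i ∈ Finset.range (D+1), Gc D ^ (D-i) * x ^ i) - ((D:ℝ)+1) * Gc D ^ D := by
    have expand : ∑ i ∈ Finset.range (D+1), Gc D ^ (D-i) * (x^i - Gc D ^ i)
        = ∑ i ∈ Finset.range (D+1), (Gc D ^ (D-i) * x^i - Gc D ^ (D-i) * Gc D ^ i) :=
      Finset.sum_congr rfl fun i _ => by ring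
    rw [expand, Finset.sum_sub_distrib]
    congr 1
    have : ∀ i ∈ Finset.range (D+1), Gc D ^ (D-i) * Gc D ^ i = Gc D ^ D := by
      intro i hi
      rw [← pow_add]
      congr 1
      have := Finset.mem_range.1 hi
      omega
    rw [Finset.sum_congr rfl this, Finset.sum_const, Finset.card_range]
    push_cast
    ring
  calc Q D x * (x - Gc D)
      = gcrit D * ((∑ i ∈ Finset.range (D+1),
          Gc D ^ (D - i) * (∑ j ∈ Finset.range i, x ^ j * Gc D ^ (i - 1 - j))) * (x - Gc D)) := by
        rw [Q]; ring
    _ = gcrit D * ((∑ i ∈ Finset.range (D+1), Gc D ^ (D-i) * x ^ i) - ((D:ℝ)+1) * Gc D ^ D) := by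
        rw [step, split]
    _ = _ := by rw [mul_sub, key2 hD]

lemma fact_mul (hD : 1 ≤ D) (x : ℝ) :
    (x - Gc D)^2 * Q D x = gcrit D * x^(D+1) - x + 1 := by
  have hA : (∑ i ∈ Finset.range (D+1), Gc D ^ (D-i) * x ^ i) * (x - Gc D)
      = x^(D+1) - Gc D ^ (D+1) := by
    rw [← geom_sum₂_mul x (Gc D) (D+1)]
    congr 1
    refine Finset.sum_congr rfl fun i hi => ?_
    rw [mul_comm]
    congr 2
  have h1 := key1 hD
  have hGc1 : Gc D = 1 + 1/(D:ℝ) := by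
    have := hD0 hD
    rw [Gc]; field_simp
  calc (x - Gc D)^2 * Q D x = (Q D x * (x - Gc D)) * (x - Gc D) := by ring
    _ = (gcrit D * (∑ i ∈ Finset.range (D+1), Gc D ^ (D-i) * x ^ i) - 1) * (x - Gc D) := by
        rw [Q_mul hD]
    _ = gcrit D * ((∑ i ∈ Finset.range (D+1), Gc D ^ (D-i) * x ^ i) * (x - Gc D)) - (x - Gc D) := by
        ring
    _ = gcrit D * x^(D+1) - gcrit D * Gc D ^(D+1) - x + Gc D := by rw [hA]; ring
    _ = _ := by rw [h1, hGc1]; ring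

lemma Q_at_Gc (hD : 1 ≤ D) :
    Q D (Gc D) = gcrit D * Gc D ^ (D-1) * ((D:ℝ) * ((D:ℝ)+1) / 2) := by
  have hstep : ∀ i ∈ Finset.range (D+1),
      Gc D ^ (D - i) * (∑ j ∈ Finset.range i, Gc D ^ j * Gc D ^ (i - 1 - j))
      = (i:ℝ) * Gc D ^ (D-1) := by
    intro i hi
    have hiD : i ≤ D := by have := Finset.mem_range.1 hi; omega
    rcases Nat.eq_zero_or_pos i with h0 | h0
    · subst h0; simp
    have inner : ∀ j ∈ Finset.range i, Gc D ^ j * Gc D ^ (i - 1 - j) = Gc D ^ (i-1) := by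
      intro j hj
      rw [← pow_add]
      congr 1
      have := Finset.mem_range.1 hj; omega
    rw [Finset.sum_congr rfl inner, Finset.sum_const, Finset.card_range, nsmul_eq_mul,
      ← mul_assoc, mul_comm (Gc D ^ (D-i)) (i:ℝ), mul_assoc, ← pow_add]
    congr 2
    omega
  have gauss : ∑ i ∈ Finset.range (D+1), (i:ℝ) = (D:ℝ) * ((D:ℝ)+1) / 2 := by
    have h2 : (∑ i ∈ Finset.range (D+1), (i:ℕ)) * 2 = (D+1) * D := by
      simpa using Finset.sum_range_id_mul_two (D+1)
    have h3 : ((∑ i ∈ Finset.range (D+1), (i:ℝ)) * 2 : ℝ) = ((D:ℝ)+1) * (D:ℝ) := by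
      have h4 := congrArg (Nat.cast (R:=ℝ)) h2
      push_cast at h4
      linarith
    linarith
  rw [Q, Finset.sum_congr rfl hstep, ← Finset.sum_mul, gauss]
  ring

lemma f_strictMono (hD : 1 ≤ D) :
    StrictMonoOn (fun x : ℝ => (x-1)/x^(D+1)) (Set.Icc 1 (Gc D)) := by
  have hD' := hD0 hD
  apply strictMonoOn_of_deriv_pos (convex_Icc _ _)
  · apply ContinuousOn.div (by fun_prop) (by fun_prop)
    intro x hx
    have : (1:ℝ) ≤ x := hx.1
    positivity
  · intro x hx
    rw [interior_Icc] at hx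
    obtain ⟨hx1, hx2⟩ := hx
    have hx0 : (0:ℝ) < x := by linarith
    have hxne : x ≠ 0 := ne_of_gt hx0
    have hd : HasDerivAt (fun x : ℝ => (x-1)/x^(D+1))
        ((1 * x^(D+1) - (x-1) * (((D:ℕ)+1 : ℕ) * x^(D+1-1))) / (x^(D+1))^2) x := by
      exact HasDerivAt.div ((hasDerivAt_id x).sub_const 1) (hasDerivAt_pow (D+1) x)
        (pow_ne_zero _ hxne)
    rw [hd.deriv]
    have hnum : 0 < 1 * x^(D+1) - (x-1) * (((D:ℕ)+1 : ℕ) * x^(D+1-1)) := by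
      have h1 : x^(D+1) = x^D * x := by rw [pow_succ]
      have h2 : D+1-1 = D := by omega
      have h3 : ((D:ℝ)+1) - (D:ℝ)*x > 0 := by
        have := hx2
        rw [Gc, lt_div_iff₀ hD'] at this
        linarith
      have hxD : 0 < x^D := pow_pos hx0 D
      rw [h1, h2]
      push_cast
      nlinarith [hxD, h3]
    positivity

lemma f_at_Gc (hD : 1 ≤ D) : (Gc D - 1)/(Gc D)^(D+1) = gcrit D := by
  have hD' := hD0 hD
  have hGc : 0 < Gc D := by linarith [one_lt_Gc hD]
  rw [div_eq_iff (by positivity), key1 hD, Gc]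
  field_simp; ring

lemma f_GLO {G_LO : ℝ → ℝ}
    (hG : ∀ g ∈ Set.Icc 0 (gcrit D), G_LO g ∈ Set.Icc 1 (Gc D) ∧ G_LO g = 1 + g*(G_LO g)^(D+1))
    {g : ℝ} (hg : g ∈ Set.Icc 0 (gcrit D)) : (G_LO g - 1)/(G_LO g)^(D+1) = g := by
  obtain ⟨⟨h1, h2⟩, heq⟩ := hG g hg
  have hp : (0:ℝ) < (G_LO g)^(D+1) := pow_pos (by linarith) _
  rw [div_eq_iff (ne_of_gt hp)]
  linarith [heq]

lemma GLO_tendsto (hD : 1 ≤ D) {G_LO : ℝ → ℝ}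
    (hG : ∀ g ∈ Set.Icc 0 (gcrit D), G_LO g ∈ Set.Icc 1 (Gc D) ∧ G_LO g = 1 + g*(G_LO g)^(D+1)) :
    Filter.Tendsto G_LO (nhdsWithin (gcrit D) (Set.Iio (gcrit D))) (nhds (Gc D)) := by
  have hD' := hD0 hD
  rw [Metric.tendsto_nhds]
  intro ε hε
  set ε' := min (ε/2) (1/(2*(D:ℝ))) with hε'def
  have hε' : 0 < ε' := lt_min (by linarith) (by positivity)
  have hε'le : ε' ≤ ε/2 := min_le_left _ _
  have hε'le2 : ε' ≤ 1/(2*(D:ℝ)) := min_le_right _ _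
  have hGc1 : Gc D - 1 = 1/(D:ℝ) := by rw [Gc]; field_simp; ring
  have hx1 : (1:ℝ) ≤ Gc D - ε' := by
    have : 1/(2*(D:ℝ)) < 1/(D:ℝ) := by
      rw [div_lt_div_iff₀ (by positivity) hD']; linarith
    linarith
  have hx2 : Gc D - ε' < Gc D := by linarith
  have hmem1 : Gc D - ε' ∈ Set.Icc 1 (Gc D) := ⟨hx1, by linarith⟩
  have hmem2 : Gc D ∈ Set.Icc 1 (Gc D) := ⟨by linarith [one_lt_Gc hD], le_refl _⟩
  set a := (Gc D - ε' - 1)/(Gc D - ε')^(D+1) with hadef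
  have ha : a < gcrit D := by
    have := f_strictMono hD hmem1 hmem2 hx2
    simp only [] at this
    rw [f_at_Gc hD] at this
    exact this
  have ha0 : 0 ≤ a := by
    apply div_nonneg (by linarith) (pow_nonneg (by linarith) _)
  filter_upwards [Ioo_mem_nhdsLT_of_mem (Set.mem_Ioc.2 ⟨ha, le_refl _⟩)] with g hg
  have hgIcc : g ∈ Set.Icc 0 (gcrit D) := ⟨by linarith [hg.1], le_of_lt hg.2⟩
  obtain ⟨⟨h1, h2⟩, _⟩ := hG g hgIcc
  have hfg := f_GLO hG hgIcc
  have hGgt : Gc D - ε' < G_LO g := by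
    by_contra hle
    push_neg at hle
    have hmemG : G_LO g ∈ Set.Icc 1 (Gc D) := ⟨h1, h2⟩
    have := (f_strictMono hD).monotoneOn hmemG hmem1 hle
    rw [hfg] at this
    exact absurd (lt_of_lt_of_le hg.1 this) (lt_irrefl a)
  rw [Real.dist_eq, abs_sub_comm, abs_of_nonneg (by linarith)]
  linarith

lemma Q_ratio (hD : 3 ≤ D) :
    Q D (Gc D) / (gcrit D * Gc D ^ (D+1)) = ((D:ℝ)*((D:ℝ)+1)/2) * ((D:ℝ)/((D:ℝ)+1))^2 := by
  have hD1 : 1 ≤ D := by omega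
  have hD' := hD0 hD1
  have hg := gcrit_pos hD1
  have hGc : 0 < Gc D := by linarith [one_lt_Gc hD1]
  rw [Q_at_Gc hD1, show D + 1 = (D-1) + 2 from by omega, pow_add]
  have hGc2 : Gc D ^ 2 = (((D:ℝ)+1)/D)^2 := by rw [Gc]
  rw [hGc2]
  have hp : (0:ℝ) < Gc D ^ (D-1) := pow_pos hGc _
  have h1 : ((D:ℝ)+1) ≠ 0 := by positivity
  field_simp

lemma value_eq (hD : 3 ≤ D) :
    Real.sqrt (Q D (Gc D) / (gcrit D * Gc D ^ (D+1))) *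
      (((D:ℝ)*((D:ℝ)+1)/2) * (gcrit D)^2 * (Gc D)^(2*D+2) / ((2 - Gc D) * D))
    = Real.sqrt ((D:ℝ)*((D:ℝ)+1)/8) / ((D:ℝ)-1) := by
  have hD1 : 1 ≤ D := by omega
  have hD' := hD0 hD1
  have hD3 : (3:ℝ) ≤ D := by exact_mod_cast hD
  have h1 : ((D:ℝ)+1) ≠ 0 := by positivity
  have hs1 : Real.sqrt (Q D (Gc D) / (gcrit D * Gc D ^ (D+1)))
      = Real.sqrt ((D:ℝ)*((D:ℝ)+1)/2) * ((D:ℝ)/((D:ℝ)+1)) := by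
    rw [Q_ratio hD, Real.sqrt_mul (by positivity), Real.sqrt_sq (by positivity)]
  have hs2 : Real.sqrt ((D:ℝ)*((D:ℝ)+1)/8) = Real.sqrt ((D:ℝ)*((D:ℝ)+1)/2) * (1/2) := by
    rw [show (D:ℝ)*((D:ℝ)+1)/8 = ((D:ℝ)*((D:ℝ)+1)/2) * (1/2)^2 from by ring,
      Real.sqrt_mul (by positivity), Real.sqrt_sq (by norm_num)]
  have hpow : (gcrit D)^2 * (Gc D)^(2*D+2) = (1/(D:ℝ))^2 := by
    rw [show 2*D+2 = (D+1)*2 from by ring, pow_mul, ← mul_pow, key1 hD1]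
  have h2Gc : 2 - Gc D = ((D:ℝ)-1)/D := by rw [Gc]; field_simp; ring
  rw [hs1, hs2, h2Gc,
    show ((D:ℝ)*((D:ℝ)+1)/2) * (gcrit D)^2 * (Gc D)^(2*D+2)
      = ((D:ℝ)*((D:ℝ)+1)/2) * ((gcrit D)^2 * (Gc D)^(2*D+2)) from by ring, hpow]
  have hD1' : (D:ℝ) - 1 ≠ 0 := by linarith
  field_simp

end NLO14

open NLO14 in
/-- Let `D ≥ 3`, `g_c := D^D/(D+1)^(D+1)`, `G_LO` the leading-order melonic
2-point function, and for `0 ≤ g < g_c` let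
`G_NLO(g) := (D(D+1)/2)·g²·G_LO(g)^(2D+2) / ((2 − G_LO(g))·(1 − g·D·G_LO(g)^(D+1)))`.
Then `lim_{g→g_c⁻} √(1 − g/g_c)·G_NLO(g) = √(D(D+1)/8)/(D − 1)`, i.e. `G_NLO` diverges like
`(1 − g/g_c)^(−1/2)` at the critical coupling. -/
theorem nlo_two_point_critical_divergence (D : ℕ) (hD : 3 ≤ D) (G_LO G_NLO : ℝ → ℝ)
    (hG : ∀ g ∈ Set.Icc (0 : ℝ) ((D : ℝ) ^ D / ((D : ℝ) + 1) ^ (D + 1)),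
      G_LO g ∈ Set.Icc (1 : ℝ) (((D : ℝ) + 1) / D) ∧ G_LO g = 1 + g * (G_LO g) ^ (D + 1))
    (hN : ∀ g ∈ Set.Ico (0 : ℝ) ((D : ℝ) ^ D / ((D : ℝ) + 1) ^ (D + 1)),
      G_NLO g = ((D : ℝ) * ((D : ℝ) + 1) / 2) * g ^ 2 * (G_LO g) ^ (2 * D + 2) /
        ((2 - G_LO g) * (1 - g * D * (G_LO g) ^ (D + 1)))) :
    Filter.Tendsto
      (fun g : ℝ => Real.sqrt (1 - g / ((D : ℝ) ^ D / ((D : ℝ) + 1) ^ (D + 1))) * G_NLO g)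
      (nhdsWithin ((D : ℝ) ^ D / ((D : ℝ) + 1) ^ (D + 1))
        (Set.Iio ((D : ℝ) ^ D / ((D : ℝ) + 1) ^ (D + 1))))
      (nhds (Real.sqrt ((D : ℝ) * ((D : ℝ) + 1) / 8) / ((D : ℝ) - 1))) := by
  have hD1 : 1 ≤ D := by omega
  have hD' := hD0 hD1
  have hgc := gcrit_pos hD1
  have hGc1 := one_lt_Gc hD1
  have hg_eq : ((D : ℝ) ^ D / ((D : ℝ) + 1) ^ (D + 1)) = gcrit D := rfl
  have hGc_eq : (((D : ℝ) + 1) / (D:ℝ)) = Gc D := rfl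
  rw [hg_eq] at hN ⊢
  rw [hg_eq, hGc_eq] at hG
  have hGc2 : Gc D < 2 := by
    rw [NLO14.Gc, div_lt_iff₀ hD']
    have : (3:ℝ) ≤ D := by exact_mod_cast hD
    linarith
  -- limits
  have hGlim := GLO_tendsto hD1 hG
  have hglim : Filter.Tendsto (fun g : ℝ => g) (nhdsWithin (gcrit D) (Set.Iio (gcrit D)))
      (nhds (gcrit D)) := tendsto_id.mono_left nhdsWithin_le_nhds
  have hne1 : gcrit D * Gc D ^ (D+1) ≠ 0 := by
    rw [key1 hD1]; positivity
  have hne2 : (2 - Gc D) * (D:ℝ) ≠ 0 := by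
    have : 0 < 2 - Gc D := by linarith
    positivity
  have t1 : Filter.Tendsto (fun g => Q D (G_LO g)) (nhdsWithin (gcrit D) (Set.Iio (gcrit D)))
      (nhds (Q D (Gc D))) := ((Q_continuous D).tendsto _).comp hGlim
  have t2 : Filter.Tendsto (fun g => gcrit D * (G_LO g)^(D+1))
      (nhdsWithin (gcrit D) (Set.Iio (gcrit D))) (nhds (gcrit D * Gc D ^ (D+1))) :=
    (hGlim.pow _).const_mul _
  have t3 := t1.div t2 hne1
  have t4 : Filter.Tendsto (fun g => Real.sqrt (Q D (G_LO g) / (gcrit D * (G_LO g)^(D+1))))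
      (nhdsWithin (gcrit D) (Set.Iio (gcrit D)))
      (nhds (Real.sqrt (Q D (Gc D) / (gcrit D * Gc D ^ (D+1))))) :=
    (Real.continuous_sqrt.tendsto _).comp t3
  have t5 : Filter.Tendsto (fun g => ((D:ℝ)*((D:ℝ)+1)/2) * g^2 * (G_LO g)^(2*D+2))
      (nhdsWithin (gcrit D) (Set.Iio (gcrit D)))
      (nhds (((D:ℝ)*((D:ℝ)+1)/2) * (gcrit D)^2 * (Gc D)^(2*D+2))) :=
    ((tendsto_const_nhds.mul (hglim.pow 2)).mul (hGlim.pow _))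
  have t6 : Filter.Tendsto (fun g => (2 - G_LO g) * (D:ℝ))
      (nhdsWithin (gcrit D) (Set.Iio (gcrit D))) (nhds ((2 - Gc D) * (D:ℝ))) :=
    (tendsto_const_nhds.sub hGlim).mul_const _
  have Hlim := t4.mul (t5.div t6 hne2)
  rw [value_eq hD] at Hlim
  refine Hlim.congr' ?_
  filter_upwards [Ioo_mem_nhdsLT_of_mem (Set.mem_Ioc.2 ⟨hgc, le_refl _⟩)] with g hg
  have hgIcc : g ∈ Set.Icc 0 (gcrit D) := ⟨le_of_lt hg.1, le_of_lt hg.2⟩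
  have hgIco : g ∈ Set.Ico 0 (gcrit D) := ⟨le_of_lt hg.1, hg.2⟩
  obtain ⟨⟨h1, h2⟩, heq⟩ := hG g hgIcc
  have hGpos : (0:ℝ) < G_LO g := by linarith
  have hpow : (0:ℝ) < (G_LO g)^(D+1) := pow_pos hGpos _
  have hgp : g * (G_LO g)^(D+1) = G_LO g - 1 := by linarith [heq]
  have hGlt : G_LO g < Gc D := by
    rcases lt_or_eq_of_le h2 with h | h
    · exact h
    exfalso
    have hkey := key1 hD1
    rw [h] at hgp
    have hGc1' : Gc D - 1 = 1/(D:ℝ) := by rw [NLO14.Gc]; field_simp; ring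
    have : g * Gc D ^ (D+1) = gcrit D * Gc D ^ (D+1) := by rw [hgp, hkey, hGc1']
    have hg_eq2 : g = gcrit D := by
      have hp : Gc D ^ (D+1) ≠ 0 := by positivity
      exact mul_right_cancel₀ hp this
    linarith [hg.2]
  have hGcGne : Gc D - G_LO g ≠ 0 := by
    have : 0 < Gc D - G_LO g := by linarith
    positivity
  have h2G : (2:ℝ) - G_LO g ≠ 0 := by
    have : (0:ℝ) < 2 - G_LO g := by linarith
    positivity
  have hden : 1 - g * (D:ℝ) * (G_LO g)^(D+1) = (D:ℝ) * (Gc D - G_LO g) := by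
    have e1 : g * (D:ℝ) * (G_LO g)^(D+1) = (D:ℝ) * (g * (G_LO g)^(D+1)) := by ring
    have hDGc : (D:ℝ) * Gc D = (D:ℝ) + 1 := by
      rw [NLO14.Gc]; field_simp
    rw [e1, hgp, mul_sub, mul_sub, hDGc]
    ring
  have hfrac : 1 - g / gcrit D
      = (Gc D - G_LO g)^2 * (Q D (G_LO g) / (gcrit D * (G_LO g)^(D+1))) := by
    have hmain : 1 - g / gcrit D
        = ((G_LO g - Gc D)^2 * Q D (G_LO g)) / (gcrit D * (G_LO g)^(D+1)) := by
      rw [fact_mul hD1, eq_div_iff (by positivity : gcrit D * (G_LO g)^(D+1) ≠ 0)]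
      have e2 : g / gcrit D * (gcrit D * (G_LO g)^(D+1)) = g * (G_LO g)^(D+1) := by
        field_simp
      rw [sub_mul, one_mul, e2, hgp]
      ring
    rw [hmain]
    ring
  have hsqrt : Real.sqrt (1 - g / gcrit D)
      = (Gc D - G_LO g) * Real.sqrt (Q D (G_LO g) / (gcrit D * (G_LO g)^(D+1))) := by
    rw [hfrac, Real.sqrt_mul (sq_nonneg _), Real.sqrt_sq (by linarith : (0:ℝ) ≤ Gc D - G_LO g)]
  rw [hN g hgIco, hden, hsqrt]
  have hDne : (D:ℝ) ≠ 0 := ne_of_gt hD'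
  simp only [Pi.div_apply]
  field_simp
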